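/- Let P, M ∈ M_n(ℂ) with P Hermitian and exp(2πiP) = I, let 𝜏 ∈ (0,1), and fix an integer p ≥ 1. For A ∈ M_n(ℂ) set 𝔼(A) = ∫₀¹ exp(2πisP)·A·exp(−2πisP) ds. Define recursively G⁽⁰⁾ = M; Ω⁽ᑫ⁾ = 2πi·𝜏·∫₀¹∫₀^{s₁} exp(2πis₂P)·(G⁽ᑫ⁻¹⁾ − 𝔼(G⁽ᑫ⁻¹⁾))·exp(−2πis₂P) ds₂ ds₁ (so that [Ω⁽ᑫ⁾, P] = 𝜏·(G⁽ᑫ⁻¹⁾ − 𝔼(G⁽ᑫ⁻¹⁾))); and G⁽ᑫ⁾ = Σ_{k=1}^{q} ((−1)^k/k!) Σ_{i₁,…,i_k ≥ 1, i₁+⋯+i_k = q} ad_{Ω^{(i₁)}}∘⋯∘ad_{Ω^{(i_k)}}(M) + (1/𝜏)·Σ_{k=2}^{q} ((−1)^k/k!) Σ_{i₁,…,i_k ≥ 1, i₁+⋯+i_k = q+1} ad_{Ω^{(i₁)}}∘⋯∘ad_{Ω^{(i_k)}}(P), where ad_X(Y) = XY − YX. Then there exists a constant W_p > 0 depending only on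 p, ‖M‖ and ‖P‖ (and not on n or 𝜏) such that ‖Ω⁽ᑫ⁾‖ ≤ W_p·𝜏^q for every 1 ≤ q ≤ p, and consequently ‖Ω⁽¹⁾ + Ω⁽²⁾ + ⋯ + Ω⁽ᵖ⁾‖ ≤ p·W_p·𝜏. -/

import Mathlib

open Matrix MeasureTheory intervalIntegral
open scoped Matrix.Norms.L2Operator

lemma my_norm_exp_le {𝔸 : Type*} [NormedRing 𝔸] [NormedAlgebra ℂ 𝔸] [CompleteSpace 𝔸]
    (hone : ‖(1 : 𝔸)‖ ≤ 1) (x : 𝔸) : ‖NormedSpace.exp x‖ ≤ Real.exp ‖x‖ := by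
  rw [Real.exp_eq_exp_ℝ, NormedSpace.exp_eq_tsum ℂ, NormedSpace.exp_eq_tsum ℝ]
  have h1 : Summable fun n : ℕ => ‖((n.factorial : ℂ))⁻¹ • x ^ n‖ :=
    NormedSpace.norm_expSeries_summable' x
  have h2 : Summable fun n : ℕ => ((n.factorial : ℝ))⁻¹ • ‖x‖ ^ n :=
    NormedSpace.expSeries_summable' (𝕂 := ℝ) ‖x‖
  refine (norm_tsum_le_tsum_norm h1).trans ?_
  refine Summable.tsum_le_tsum (fun n => ?_) h1 h2
  rw [norm_smul, norm_inv, smul_eq_mul]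
  have hxn : ‖x ^ n‖ ≤ ‖x‖ ^ n := by
    cases n with
    | zero => simpa using hone
    | succ n => exact norm_pow_le' x n.succ_pos
  have hfac : ‖((n.factorial : ℂ))‖ = (n.factorial : ℝ) := by
    simp
  rw [hfac]
  gcongr

lemma matrix_norm_one_le (n : ℕ) : ‖(1 : Matrix (Fin n) (Fin n) ℂ)‖ ≤ 1 := by
  rw [Matrix.cstar_norm_def, _root_.map_one, ContinuousLinearMap.one_def]
  exact ContinuousLinearMap.norm_id_le

lemma foldr_ad_norm_le {𝔸 : Type*} [NonUnitalNormedRing 𝔸] (l : List 𝔸) (Y : 𝔸) :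
    ‖l.foldr (fun A Z => A * Z - Z * A) Y‖ ≤ 2 ^ l.length * (l.map norm).prod * ‖Y‖ := by
  induction l with
  | nil => simp
  | cons A t ih =>
    simp only [List.foldr_cons, List.length_cons, List.map_cons, List.prod_cons]
    set Z := t.foldr (fun A Z => A * Z - Z * A) Y with hZ
    have hprodnn : (0:ℝ) ≤ (t.map norm).prod :=
      List.prod_nonneg (by intro a ha; simp only [List.mem_map] at ha; obtain ⟨b, _, rfl⟩ := ha; exact norm_nonneg b)
    calc ‖A * Z - Z * A‖ ≤ ‖A * Z‖ + ‖Z * A‖ := norm_sub_le _ _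
      _ ≤ ‖A‖ * ‖Z‖ + ‖Z‖ * ‖A‖ := add_le_add (norm_mul_le _ _) (norm_mul_le _ _)
      _ = 2 * ‖A‖ * ‖Z‖ := by ring
      _ ≤ 2 * ‖A‖ * (2 ^ t.length * (t.map norm).prod * ‖Y‖) := by
          have h2 : (0:ℝ) ≤ 2 * ‖A‖ := by positivity
          exact mul_le_mul_of_nonneg_left ih h2
      _ = 2 ^ (t.length + 1) * (‖A‖ * (t.map norm).prod) * ‖Y‖ := by ring

/-- Nested commutator `ad_{X 0} ∘ ad_{X 1} ∘ ⋯ ∘ ad_{X (k−1)}` applied to `Y`,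
where `ad_A(B) = A*B − B*A`. -/
def nestedAd {𝒜 : Type*} [Ring 𝒜] {k : ℕ} (X : Fin k → 𝒜) (Y : 𝒜) : 𝒜 :=
  (List.ofFn X).foldr (fun A Z => A * Z - Z * A) Y

lemma nestedAd_norm_le {𝔸 : Type*} [NormedRing 𝔸] {k : ℕ} (X : Fin k → 𝔸) (Y : 𝔸) :
    ‖nestedAd X Y‖ ≤ 2 ^ k * (∏ j, ‖X j‖) * ‖Y‖ := by
  have h := foldr_ad_norm_le (List.ofFn X) Y
  simpa [nestedAd, List.map_ofFn, List.prod_ofFn, Function.comp] using h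

lemma antidiagonalTuple_card_le (k m : ℕ) :
    (Finset.Nat.antidiagonalTuple k m).card ≤ (m + 1) ^ k := by
  classical
  calc (Finset.Nat.antidiagonalTuple k m).card
      ≤ (Fintype.piFinset fun _ : Fin k => Finset.range (m + 1)).card := by
        apply Finset.card_le_card
        intro x hx
        rw [Finset.Nat.mem_antidiagonalTuple] at hx
        rw [Fintype.mem_piFinset]
        intro j
        rw [Finset.mem_range, Nat.lt_succ_iff]
        exact hx ▸ Finset.single_le_sum (f := x) (fun i _ => Nat.zero_le _) (Finset.mem_univ j)
    _ = (m + 1) ^ k := by simp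

set_option maxHeartbeats 2000000 in
/-- **Bounds on the Schrieffer-Wolff generators.**  For every `p ≥ 1` and bounds
`mNorm, pNorm` there is a constant `W > 0`, depending only on `p`, `mNorm` and `pNorm`
(not on the matrix size `n` or on `τ`), such that for all Hermitian `P` with
`exp(2πiP) = I`, `‖P‖ ≤ pNorm`, all `M` with `‖M‖ ≤ mNorm` and all `τ ∈ (0,1)`, the
order-`q` generators `Ω⁽ᑫ⁾` of the Schrieffer-Wolff recursion satisfy `‖Ω⁽ᑫ⁾‖ ≤ W·τ^q`
for `1 ≤ q ≤ p`, and consequently `‖Ω⁽¹⁾ + ⋯ + Ω⁽ᵖ⁾‖ ≤ p·W·τ`. -/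
theorem schrieffer_wolff_generator_bounds
    (p : ℕ) (hp : 1 ≤ p) (mNorm pNorm : ℝ) :
    ∃ W : ℝ, 0 < W ∧
      ∀ (n : ℕ) (P M : Matrix (Fin n) (Fin n) ℂ), P.IsHermitian →
        NormedSpace.exp ((((2 * Real.pi : ℝ) : ℂ) * Complex.I) • P) = 1 →
        ‖M‖ ≤ mNorm → ‖P‖ ≤ pNorm →
        ∀ τ : ℝ, τ ∈ Set.Ioo (0 : ℝ) 1 →
        ∀ (E : Matrix (Fin n) (Fin n) ℂ → Matrix (Fin n) (Fin n) ℂ),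
          (∀ A, E A = ∫ s in (0:ℝ)..1,
            NormedSpace.exp ((((2 * Real.pi * s : ℝ) : ℂ) * Complex.I) • P) * A *
              NormedSpace.exp ((-((2 * Real.pi * s : ℝ) : ℂ) * Complex.I) • P)) →
        ∀ (G Ω : ℕ → Matrix (Fin n) (Fin n) ℂ),
          G 0 = M →
          (∀ q, 1 ≤ q → Ω q = ((((2 * Real.pi : ℝ) : ℂ) * Complex.I) * (τ : ℂ)) •
            ∫ s₁ in (0:ℝ)..1, ∫ s₂ in (0:ℝ)..s₁,
              NormedSpace.exp ((((2 * Real.pi * s₂ : ℝ) : ℂ) * Complex.I) • P) *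
                (G (q - 1) - E (G (q - 1))) *
                NormedSpace.exp ((-((2 * Real.pi * s₂ : ℝ) : ℂ) * Complex.I) • P)) →
          (∀ q, 1 ≤ q → q ≤ p → G q =
            (∑ k ∈ Finset.Icc 1 q, ((-1 : ℂ) ^ k / (k.factorial : ℂ)) •
              ∑ i ∈ (Finset.Nat.antidiagonalTuple k q).filter (fun i => ∀ j, 1 ≤ i j),
                nestedAd (fun j => Ω (i j)) M) +
            τ⁻¹ • ∑ k ∈ Finset.Icc 2 q, ((-1 : ℂ) ^ k / (k.factorial : ℂ)) •
              ∑ i ∈ (Finset.Nat.antidiagonalTuple k (q + 1)).filter (fun i => ∀ j, 1 ≤ i j),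
                nestedAd (fun j => Ω (i j)) P) →
          (∀ q, 1 ≤ q → q ≤ p → ‖Ω q‖ ≤ W * τ ^ q) ∧
          ‖∑ q ∈ Finset.Icc 1 p, Ω q‖ ≤ p * W * τ := by
  have hpi := Real.pi_pos
  -- constants
  obtain ⟨mN, hmNdef⟩ : ∃ x : ℝ, x = max mNorm 0 + 1 := ⟨_, rfl⟩
  obtain ⟨pN, hpNdef⟩ : ∃ x : ℝ, x = max pNorm 0 + 1 := ⟨_, rfl⟩
  have hmN1 : 1 ≤ mN := by have := le_max_right mNorm 0; rw [hmNdef]; linarith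
  have hpN1 : 1 ≤ pN := by have := le_max_right pNorm 0; rw [hpNdef]; linarith
  obtain ⟨K, hKdef⟩ : ∃ x : ℝ, x = Real.exp (2 * Real.pi * pN) := ⟨_, rfl⟩
  have hK1 : 1 ≤ K := by
    rw [hKdef, show (1:ℝ) = Real.exp 0 from (Real.exp_zero).symm]
    apply Real.exp_le_exp.2
    positivity
  obtain ⟨α, hαdef⟩ : ∃ x : ℝ, x = 2 * Real.pi * (K ^ 2 * (1 + K ^ 2)) + 1 := ⟨_, rfl⟩
  have hα1 : 1 ≤ α := by
    have h : 0 ≤ 2 * Real.pi * (K ^ 2 * (1 + K ^ 2)) :=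
      mul_nonneg (by positivity) (mul_nonneg (sq_nonneg K) (by nlinarith [sq_nonneg K]))
    rw [hαdef]; linarith
  obtain ⟨R, hRdef⟩ : ∃ x : ℝ, x = 2 * p * ((p:ℝ) + 2) ^ p * (2 * α) ^ p * (mN + pN) := ⟨_, rfl⟩
  have hp1 : (1:ℝ) ≤ (p:ℝ) := by exact_mod_cast hp
  have hR1 : 1 ≤ R := by
    have h2 : (1:ℝ) ≤ ((p:ℝ) + 2) ^ p := one_le_pow₀ (by linarith)
    have h3 : (1:ℝ) ≤ (2 * α) ^ p := one_le_pow₀ (by linarith)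
    have h4 : (1:ℝ) ≤ mN + pN := by linarith
    have a1 : 2 * (p:ℝ) ≤ 2 * (p:ℝ) * ((p:ℝ) + 2) ^ p :=
      le_mul_of_one_le_right (by linarith) h2
    have a2 : 2 * (p:ℝ) * ((p:ℝ) + 2) ^ p
        ≤ 2 * (p:ℝ) * ((p:ℝ) + 2) ^ p * (2 * α) ^ p :=
      le_mul_of_one_le_right (by linarith) h3
    have a3 : 2 * (p:ℝ) * ((p:ℝ) + 2) ^ p * (2 * α) ^ p
        ≤ 2 * (p:ℝ) * ((p:ℝ) + 2) ^ p * (2 * α) ^ p * (mN + pN) :=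
      le_mul_of_one_le_right (by linarith) h4
    rw [hRdef]
    linarith
  obtain ⟨C, hCdef⟩ : ∃ C : ℕ → ℝ,
      C = fun q => Nat.rec (motive := fun _ => ℝ) mN (fun _ prev => R * prev ^ p) q := ⟨_, rfl⟩
  have hC0 : C 0 = mN := by rw [hCdef]; rfl
  have hCsucc : ∀ q, C (q + 1) = R * C q ^ p := fun q => by rw [hCdef]
  have hC1 : ∀ q, 1 ≤ C q := by
    intro q
    induction q with
    | zero => rw [hC0]; exact hmN1
    | succ q ih =>
      rw [hCsucc]
      calc (1:ℝ) = 1 * 1 := by norm_num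
        _ ≤ R * C q ^ p := mul_le_mul hR1 (one_le_pow₀ ih) (by norm_num) (by linarith)
  have hCmono : Monotone C := by
    apply monotone_nat_of_le_succ
    intro q
    rw [hCsucc]
    calc C q = 1 * C q ^ 1 := by rw [pow_one, one_mul]
      _ ≤ R * C q ^ p := by
          apply mul_le_mul hR1 (pow_le_pow_right₀ (hC1 q) hp) _ (by linarith)
          rw [pow_one]; linarith [hC1 q]
  refine ⟨α * C p, by nlinarith [hC1 p], ?_⟩
  intro n P M _ _ hM hP τ hτ E hEdef G Ω hG0 hΩdef hGdef
  obtain ⟨hτ0, hτ1⟩ := hτ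
  have hτne : τ ≠ 0 := ne_of_gt hτ0
  have hMn : ‖M‖ ≤ mN := le_trans hM (by rw [hmNdef]; have := le_max_left mNorm 0; linarith)
  have hPn : ‖P‖ ≤ pN := le_trans hP (by rw [hpNdef]; have := le_max_left pNorm 0; linarith)
  -- exponential bounds
  have hexpK : ∀ c : ℂ, ‖c‖ ≤ 2 * Real.pi → ‖NormedSpace.exp (c • P)‖ ≤ K := by
    intro c hc
    refine (my_norm_exp_le (matrix_norm_one_le n) _).trans ?_
    rw [hKdef]
    apply Real.exp_le_exp.2
    rw [norm_smul]
    exact mul_le_mul hc hPn (norm_nonneg _) (by positivity)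
  have hcpos : ∀ s : ℝ, ‖(((2 * Real.pi * s : ℝ) : ℂ) * Complex.I)‖ = |2 * Real.pi * s| := by
    intro s
    rw [norm_mul, Complex.norm_I, mul_one, Complex.norm_real, Real.norm_eq_abs]
  have hcneg : ∀ s : ℝ, ‖(-((2 * Real.pi * s : ℝ) : ℂ) * Complex.I)‖ = |2 * Real.pi * s| := by
    intro s
    rw [norm_mul, Complex.norm_I, mul_one, norm_neg, Complex.norm_real, Real.norm_eq_abs]
  have habs : ∀ s : ℝ, |s| ≤ 1 → |2 * Real.pi * s| ≤ 2 * Real.pi := by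
    intro s hs
    rw [abs_mul, abs_of_pos (by positivity : (0:ℝ) < 2 * Real.pi)]
    calc 2 * Real.pi * |s| ≤ 2 * Real.pi * 1 := mul_le_mul_of_nonneg_left hs (by positivity)
      _ = 2 * Real.pi := by ring
  -- conjugation bound
  have hconj : ∀ s : ℝ, |s| ≤ 1 → ∀ A : Matrix (Fin n) (Fin n) ℂ,
      ‖NormedSpace.exp ((((2 * Real.pi * s : ℝ) : ℂ) * Complex.I) • P) * A *
        NormedSpace.exp ((-((2 * Real.pi * s : ℝ) : ℂ) * Complex.I) • P)‖ ≤ K ^ 2 * ‖A‖ := by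
    intro s hs A
    have h1 : ‖NormedSpace.exp ((((2 * Real.pi * s : ℝ) : ℂ) * Complex.I) • P)‖ ≤ K :=
      hexpK _ (by rw [hcpos]; exact habs s hs)
    have h2 : ‖NormedSpace.exp ((-((2 * Real.pi * s : ℝ) : ℂ) * Complex.I) • P)‖ ≤ K :=
      hexpK _ (by rw [hcneg]; exact habs s hs)
    calc ‖_ * A * _‖ ≤ ‖_ * A‖ * ‖_‖ := norm_mul_le _ _
      _ ≤ (‖_‖ * ‖A‖) * ‖_‖ := mul_le_mul_of_nonneg_right (norm_mul_le _ _) (norm_nonneg _)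
      _ ≤ (K * ‖A‖) * K := by
          apply mul_le_mul _ h2 (norm_nonneg _) (by positivity)
          exact mul_le_mul_of_nonneg_right h1 (norm_nonneg _)
      _ = K ^ 2 * ‖A‖ := by ring
  -- averaging bound
  have hEbound : ∀ A, ‖E A‖ ≤ K ^ 2 * ‖A‖ := by
    intro A
    rw [hEdef A]
    have hb : ∀ s ∈ Set.uIoc (0:ℝ) 1,
        ‖NormedSpace.exp ((((2 * Real.pi * s : ℝ) : ℂ) * Complex.I) • P) * A *
          NormedSpace.exp ((-((2 * Real.pi * s : ℝ) : ℂ) * Complex.I) • P)‖ ≤ K ^ 2 * ‖A‖ := by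
      intro s hs
      rw [Set.uIoc_of_le (by norm_num : (0:ℝ) ≤ 1)] at hs
      exact hconj s (abs_le.2 ⟨by linarith [hs.1], hs.2⟩) A
    have := intervalIntegral.norm_integral_le_of_norm_le_const hb
    simpa using this
  -- bound on Ω in terms of G
  have hΩbound : ∀ r : ℕ, ‖G r‖ ≤ C r * τ ^ r → ‖Ω (r + 1)‖ ≤ α * C r * τ ^ (r + 1) := by
    intro r hGr
    rw [hΩdef (r + 1) (by omega)]
    simp only [Nat.add_sub_cancel]
    set Δ := G r - E (G r) with hΔdef
    have hΔ : ‖Δ‖ ≤ (1 + K ^ 2) * ‖G r‖ := by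
      calc ‖Δ‖ ≤ ‖G r‖ + ‖E (G r)‖ := norm_sub_le _ _
        _ ≤ ‖G r‖ + K ^ 2 * ‖G r‖ := by linarith [hEbound (G r)]
        _ = (1 + K ^ 2) * ‖G r‖ := by ring
    have houter : ‖∫ s₁ in (0:ℝ)..1, ∫ s₂ in (0:ℝ)..s₁,
        NormedSpace.exp ((((2 * Real.pi * s₂ : ℝ) : ℂ) * Complex.I) • P) * Δ *
          NormedSpace.exp ((-((2 * Real.pi * s₂ : ℝ) : ℂ) * Complex.I) • P)‖ ≤ K ^ 2 * ‖Δ‖ := by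
      have hb : ∀ s₁ ∈ Set.uIoc (0:ℝ) 1, ‖∫ s₂ in (0:ℝ)..s₁,
          NormedSpace.exp ((((2 * Real.pi * s₂ : ℝ) : ℂ) * Complex.I) • P) * Δ *
            NormedSpace.exp ((-((2 * Real.pi * s₂ : ℝ) : ℂ) * Complex.I) • P)‖ ≤ K ^ 2 * ‖Δ‖ := by
        intro s₁ hs₁
        rw [Set.uIoc_of_le (by norm_num : (0:ℝ) ≤ 1)] at hs₁
        have hbin : ∀ s₂ ∈ Set.uIoc (0:ℝ) s₁,
            ‖NormedSpace.exp ((((2 * Real.pi * s₂ : ℝ) : ℂ) * Complex.I) • P) * Δ *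
            NormedSpace.exp ((-((2 * Real.pi * s₂ : ℝ) : ℂ) * Complex.I) • P)‖ ≤ K ^ 2 * ‖Δ‖ := by
          intro s₂ hs₂
          rw [Set.uIoc_of_le hs₁.1.le] at hs₂
          exact hconj s₂ (abs_le.2 ⟨by linarith [hs₂.1], le_trans hs₂.2 hs₁.2⟩) Δ
        have h := intervalIntegral.norm_integral_le_of_norm_le_const hbin
        refine h.trans ?_
        have hK2Δ : (0:ℝ) ≤ K ^ 2 * ‖Δ‖ := by positivity
        calc K ^ 2 * ‖Δ‖ * |s₁ - 0| ≤ K ^ 2 * ‖Δ‖ * 1 := by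
              apply mul_le_mul_of_nonneg_left _ hK2Δ
              rw [sub_zero, abs_of_pos hs₁.1]; exact hs₁.2
          _ = K ^ 2 * ‖Δ‖ := mul_one _
      have := intervalIntegral.norm_integral_le_of_norm_le_const hb
      simpa using this
    rw [norm_smul]
    have hcn : ‖(((2 * Real.pi : ℝ) : ℂ) * Complex.I) * (τ : ℂ)‖ = 2 * Real.pi * τ := by
      rw [norm_mul, norm_mul, Complex.norm_I, mul_one, Complex.norm_real, Complex.norm_real,
        Real.norm_eq_abs, Real.norm_eq_abs, abs_of_pos (by positivity : (0:ℝ) < 2 * Real.pi),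
        abs_of_pos hτ0]
    rw [hcn]
    have hchain : ‖∫ s₁ in (0:ℝ)..1, ∫ s₂ in (0:ℝ)..s₁,
        NormedSpace.exp ((((2 * Real.pi * s₂ : ℝ) : ℂ) * Complex.I) • P) * Δ *
          NormedSpace.exp ((-((2 * Real.pi * s₂ : ℝ) : ℂ) * Complex.I) • P)‖
        ≤ K ^ 2 * ((1 + K ^ 2) * (C r * τ ^ r)) := by
      refine houter.trans ?_
      have h1 : ‖Δ‖ ≤ (1 + K ^ 2) * (C r * τ ^ r) := by
        refine hΔ.trans ?_
        apply mul_le_mul_of_nonneg_left hGr (by nlinarith)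
      exact mul_le_mul_of_nonneg_left h1 (by positivity)
    refine (mul_le_mul_of_nonneg_left hchain (by positivity)).trans ?_
    calc 2 * Real.pi * τ * (K ^ 2 * ((1 + K ^ 2) * (C r * τ ^ r)))
        = (2 * Real.pi * (K ^ 2 * (1 + K ^ 2))) * (C r * (τ ^ r * τ)) := by ring
      _ ≤ α * (C r * (τ ^ r * τ)) := by
          apply mul_le_mul_of_nonneg_right _ ?_
          · rw [hαdef]; linarith
          · have := hC1 r
            have h1 : (0:ℝ) ≤ τ ^ r * τ := by positivity
            nlinarith
      _ = α * C r * τ ^ (r + 1) := by rw [pow_succ]; ring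
  -- main induction: bound on G
  have key : ∀ q, q ≤ p → ‖G q‖ ≤ C q * τ ^ q := by
    intro q
    induction q using Nat.strong_induction_on with
    | _ q IH =>
      intro hqp
      rcases Nat.eq_zero_or_pos q with hq0 | hq1
      · subst hq0
        rw [hG0, hC0, pow_zero, mul_one]
        exact hMn
      · obtain ⟨r, rfl⟩ : ∃ r, q = r + 1 := ⟨q - 1, by omega⟩
        have hrp : r ≤ p := by omega
        have hACpos : (0:ℝ) < α * C r := by nlinarith [hC1 r]
        have h2AC1 : (1:ℝ) ≤ 2 * (α * C r) := by nlinarith [hC1 r]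
        have hmpN : (0:ℝ) < mN + pN := by linarith
        -- uniform Ω bound for indices up to r+1
        have hΩbd : ∀ s : ℕ, 1 ≤ s → s ≤ r + 1 → ‖Ω s‖ ≤ α * C r * τ ^ s := by
          intro s hs1 hs2
          obtain ⟨t, rfl⟩ : ∃ t, s = t + 1 := ⟨s - 1, by omega⟩
          have h := hΩbound t (IH t (by omega) (by omega))
          refine h.trans ?_
          apply mul_le_mul_of_nonneg_right _ (by positivity)
          exact mul_le_mul_of_nonneg_left (hCmono (by omega : t ≤ r)) (by linarith)
        -- nestedAd bound
        have hNest : ∀ (k m : ℕ), k ≤ p → ∀ (Y : Matrix (Fin n) (Fin n) ℂ), ‖Y‖ ≤ mN + pN →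
            ∀ i : Fin k → ℕ, (∑ j, i j = m) → (∀ j, 1 ≤ i j) → (∀ j, i j ≤ r + 1) →
            ‖nestedAd (fun j => Ω (i j)) Y‖ ≤ (2 * (α * C r)) ^ p * τ ^ m * (mN + pN) := by
          intro k m hkp Y hY i hisum hipos hile
          have hprod : (∏ j, ‖Ω (i j)‖) ≤ ∏ j : Fin k, (α * C r * τ ^ (i j)) :=
            Finset.prod_le_prod (fun j _ => norm_nonneg _)
              (fun j _ => hΩbd (i j) (hipos j) (hile j))
          have hprodeq : (∏ j : Fin k, (α * C r * τ ^ (i j))) = (α * C r) ^ k * τ ^ m := by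
            rw [Finset.prod_mul_distrib, Finset.prod_const, Finset.prod_pow_eq_pow_sum, hisum]
            simp
          have e1 : (2:ℝ) ^ k * ((α * C r) ^ k * τ ^ m) = (2 * (α * C r)) ^ k * τ ^ m := by
            rw [mul_pow]; ring
          calc ‖nestedAd (fun j => Ω (i j)) Y‖ ≤ 2 ^ k * (∏ j, ‖Ω (i j)‖) * ‖Y‖ :=
              nestedAd_norm_le _ _
            _ ≤ 2 ^ k * ((α * C r) ^ k * τ ^ m) * (mN + pN) := by
                apply mul_le_mul _ hY (norm_nonneg _) ?_
                · refine mul_le_mul_of_nonneg_left (hprod.trans_eq hprodeq) (by positivity)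
                · exact mul_nonneg (by positivity)
                    (mul_nonneg (pow_nonneg hACpos.le k) (by positivity))
            _ = (2 * (α * C r)) ^ k * τ ^ m * (mN + pN) := by rw [e1]
            _ ≤ (2 * (α * C r)) ^ p * τ ^ m * (mN + pN) := by
                apply mul_le_mul_of_nonneg_right _ (by linarith)
                apply mul_le_mul_of_nonneg_right _ (by positivity)
                exact pow_le_pow_right₀ h2AC1 hkp
        have hcoef : ∀ k : ℕ, ‖(-1 : ℂ) ^ k / (k.factorial : ℂ)‖ ≤ 1 := by
          intro k
          rw [norm_div, norm_pow, norm_neg, norm_one, one_pow, Complex.norm_natCast,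
            div_le_one (by exact_mod_cast k.factorial_pos)]
          exact_mod_cast Nat.one_le_iff_ne_zero.2 k.factorial_pos.ne'
        obtain ⟨B, hBdef⟩ : ∃ x : ℝ, x = ((r:ℝ) + 3) ^ p * ((2 * (α * C r)) ^ p * (mN + pN))
          := ⟨_, rfl⟩
        have hBnn : 0 ≤ B := by
          rw [hBdef]
          exact mul_nonneg (by positivity)
            (mul_nonneg (pow_nonneg (by linarith) p) (by linarith))
        -- bound for tuple-sums
        have hsumbd : ∀ (k m : ℕ), k ≤ p → m ≤ r + 2 →
            ∀ (Y : Matrix (Fin n) (Fin n) ℂ), ‖Y‖ ≤ mN + pN →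
            (∀ i ∈ (Finset.Nat.antidiagonalTuple k m).filter (fun i => ∀ j, 1 ≤ i j),
              ∀ j, i j ≤ r + 1) →
            ‖∑ i ∈ (Finset.Nat.antidiagonalTuple k m).filter (fun i => ∀ j, 1 ≤ i j),
              nestedAd (fun j => Ω (i j)) Y‖ ≤ B * τ ^ m := by
          intro k m hkp hm Y hY hile
          have hcard : ((Finset.Nat.antidiagonalTuple k m).filter (fun i => ∀ j, 1 ≤ i j)).card
              ≤ ((r:ℕ) + 3) ^ p := by
            calc ((Finset.Nat.antidiagonalTuple k m).filter (fun i => ∀ j, 1 ≤ i j)).card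
                ≤ (Finset.Nat.antidiagonalTuple k m).card :=
                  Finset.card_le_card (Finset.filter_subset _ _)
              _ ≤ (m + 1) ^ k := antidiagonalTuple_card_le k m
              _ ≤ (r + 3) ^ k := Nat.pow_le_pow_left (by omega) k
              _ ≤ (r + 3) ^ p := Nat.pow_le_pow_right (by omega) hkp
          refine (norm_sum_le _ _).trans ?_
          have h1 := Finset.sum_le_card_nsmul
            ((Finset.Nat.antidiagonalTuple k m).filter (fun i => ∀ j, 1 ≤ i j))
            (fun i => ‖nestedAd (fun j => Ω (i j)) Y‖)
            ((2 * (α * C r)) ^ p * τ ^ m * (mN + pN)) ?_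
          · refine h1.trans ?_
            rw [nsmul_eq_mul]
            have hcard' : (((Finset.Nat.antidiagonalTuple k m).filter
                (fun i => ∀ j, 1 ≤ i j)).card : ℝ) ≤ ((r:ℝ) + 3) ^ p := by
              calc (((Finset.Nat.antidiagonalTuple k m).filter
                  (fun i => ∀ j, 1 ≤ i j)).card : ℝ) ≤ (((r + 3) ^ p : ℕ) : ℝ) := by
                    exact_mod_cast hcard
                _ = ((r:ℝ) + 3) ^ p := by push_cast; ring
            have hnn : (0:ℝ) ≤ (2 * (α * C r)) ^ p * τ ^ m * (mN + pN) :=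
              mul_nonneg (mul_nonneg (pow_nonneg (by linarith) p) (by positivity)) (by linarith)
            calc (((Finset.Nat.antidiagonalTuple k m).filter (fun i => ∀ j, 1 ≤ i j)).card : ℝ) *
                ((2 * (α * C r)) ^ p * τ ^ m * (mN + pN))
                ≤ ((r:ℝ) + 3) ^ p * ((2 * (α * C r)) ^ p * τ ^ m * (mN + pN)) :=
                  mul_le_mul_of_nonneg_right hcard' hnn
              _ = B * τ ^ m := by rw [hBdef]; ring
          · intro i hi
            have hmem := hi
            rw [Finset.mem_filter, Finset.Nat.mem_antidiagonalTuple] at hmem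
            exact hNest k m hkp Y hY i hmem.1 hmem.2 (hile i hi)
        -- parts of tuples summing to r+2 with k ≥ 2 are at most r+1
        have hpart : ∀ (k : ℕ), 2 ≤ k → ∀ i : Fin k → ℕ, (∑ j, i j = r + 2) →
            (∀ j, 1 ≤ i j) → ∀ j, i j ≤ r + 1 := by
          intro k hk i hisum hipos j
          by_contra hcon
          push_neg at hcon
          have hk0 : 0 < k := by omega
          have hk1 : 1 < k := by omega
          have hj' : ∃ j' : Fin k, j' ≠ j := by
            rcases eq_or_ne j ⟨0, hk0⟩ with h | h
            · refine ⟨⟨1, hk1⟩, ?_⟩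
              rw [h]
              simp [Fin.ext_iff]
            · exact ⟨⟨0, hk0⟩, fun hh => h hh.symm⟩
          obtain ⟨j', hne⟩ := hj'
          have hsum2 : i j + i j' ≤ ∑ t, i t := by
            have h := Finset.sum_le_sum_of_subset
              (Finset.subset_univ ({j, j'} : Finset (Fin k))) (f := i)
            rwa [Finset.sum_pair (Ne.symm hne)] at h
          have := hipos j'
          omega
        -- put it together
        rw [hGdef (r + 1) (by omega) hqp]
        have hS1 : ‖∑ k ∈ Finset.Icc 1 (r + 1), ((-1 : ℂ) ^ k / (k.factorial : ℂ)) •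
            ∑ i ∈ (Finset.Nat.antidiagonalTuple k (r + 1)).filter (fun i => ∀ j, 1 ≤ i j),
              nestedAd (fun j => Ω (i j)) M‖ ≤ (p:ℝ) * (B * τ ^ (r + 1)) := by
          refine (norm_sum_le _ _).trans ?_
          have h1 := Finset.sum_le_card_nsmul (Finset.Icc 1 (r + 1))
            (fun k => ‖((-1 : ℂ) ^ k / (k.factorial : ℂ)) •
              ∑ i ∈ (Finset.Nat.antidiagonalTuple k (r + 1)).filter (fun i => ∀ j, 1 ≤ i j),
                nestedAd (fun j => Ω (i j)) M‖) (B * τ ^ (r + 1)) ?_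
          · refine h1.trans ?_
            rw [nsmul_eq_mul, Nat.card_Icc]
            simp only [Nat.add_sub_cancel]
            apply mul_le_mul_of_nonneg_right _ (by positivity)
            exact_mod_cast hqp
          · intro k hk
            rw [Finset.mem_Icc] at hk
            rw [norm_smul]
            have h2 : ‖∑ i ∈ (Finset.Nat.antidiagonalTuple k (r + 1)).filter
                (fun i => ∀ j, 1 ≤ i j), nestedAd (fun j => Ω (i j)) M‖ ≤ B * τ ^ (r + 1) := by
              apply hsumbd k (r + 1) (le_trans hk.2 hqp) (by omega) M (by linarith)
              intro i hi j
              rw [Finset.mem_filter, Finset.Nat.mem_antidiagonalTuple] at hi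
              calc i j ≤ ∑ t, i t :=
                  Finset.single_le_sum (f := i) (fun t _ => Nat.zero_le _) (Finset.mem_univ j)
                _ = r + 1 := hi.1
            calc ‖(-1 : ℂ) ^ k / (k.factorial : ℂ)‖ * ‖∑ i ∈
                (Finset.Nat.antidiagonalTuple k (r + 1)).filter (fun i => ∀ j, 1 ≤ i j),
                  nestedAd (fun j => Ω (i j)) M‖
                ≤ 1 * (B * τ ^ (r + 1)) :=
                  mul_le_mul (hcoef k) h2 (norm_nonneg _) (by norm_num)
              _ = B * τ ^ (r + 1) := one_mul _
        have hS2 : ‖∑ k ∈ Finset.Icc 2 (r + 1), ((-1 : ℂ) ^ k / (k.factorial : ℂ)) •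
            ∑ i ∈ (Finset.Nat.antidiagonalTuple k (r + 1 + 1)).filter (fun i => ∀ j, 1 ≤ i j),
              nestedAd (fun j => Ω (i j)) P‖ ≤ (p:ℝ) * (B * τ ^ (r + 2)) := by
          refine (norm_sum_le _ _).trans ?_
          have h1 := Finset.sum_le_card_nsmul (Finset.Icc 2 (r + 1))
            (fun k => ‖((-1 : ℂ) ^ k / (k.factorial : ℂ)) •
              ∑ i ∈ (Finset.Nat.antidiagonalTuple k (r + 1 + 1)).filter (fun i => ∀ j, 1 ≤ i j),
                nestedAd (fun j => Ω (i j)) P‖) (B * τ ^ (r + 2)) ?_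
          · refine h1.trans ?_
            rw [nsmul_eq_mul, Nat.card_Icc]
            apply mul_le_mul_of_nonneg_right _ (by positivity)
            have : ((r + 1 + 1 - 2 : ℕ) : ℝ) = (r : ℝ) := by
              have : r + 1 + 1 - 2 = r := by omega
              rw [this]
            rw [this]
            exact_mod_cast hrp
          · intro k hk
            rw [Finset.mem_Icc] at hk
            rw [norm_smul]
            have h2 : ‖∑ i ∈ (Finset.Nat.antidiagonalTuple k (r + 1 + 1)).filter
                (fun i => ∀ j, 1 ≤ i j), nestedAd (fun j => Ω (i j)) P‖ ≤ B * τ ^ (r + 2) := by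
              apply hsumbd k (r + 2) (le_trans hk.2 hqp) (by omega) P (by linarith)
              intro i hi j
              rw [Finset.mem_filter, Finset.Nat.mem_antidiagonalTuple] at hi
              exact hpart k hk.1 i hi.1 hi.2 j
            calc ‖(-1 : ℂ) ^ k / (k.factorial : ℂ)‖ * ‖∑ i ∈
                (Finset.Nat.antidiagonalTuple k (r + 1 + 1)).filter (fun i => ∀ j, 1 ≤ i j),
                  nestedAd (fun j => Ω (i j)) P‖
                ≤ 1 * (B * τ ^ (r + 2)) :=
                  mul_le_mul (hcoef k) h2 (norm_nonneg _) (by norm_num)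
              _ = B * τ ^ (r + 2) := one_mul _
        have hB' : B ≤ ((p:ℝ) + 2) ^ p * ((2 * (α * C r)) ^ p * (mN + pN)) := by
          rw [hBdef]
          apply mul_le_mul_of_nonneg_right _
            (mul_nonneg (pow_nonneg (by linarith) p) (by linarith))
          apply pow_le_pow_left₀ (by positivity)
          have h : (r:ℝ) + 1 ≤ (p:ℝ) := by exact_mod_cast hqp
          linarith
        have h2pB : 2 * (p:ℝ) * B ≤ R * C r ^ p := by
          have e2 : (2 * (α * C r)) ^ p = (2 * α) ^ p * C r ^ p := by
            rw [show (2 : ℝ) * (α * C r) = (2 * α) * C r by ring, mul_pow]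
          calc 2 * (p:ℝ) * B ≤ 2 * (p:ℝ) * (((p:ℝ) + 2) ^ p * ((2 * (α * C r)) ^ p * (mN + pN)))
              := mul_le_mul_of_nonneg_left hB' (by positivity)
            _ = R * C r ^ p := by rw [hRdef, e2]; ring
        refine (norm_add_le _ _).trans ?_
        rw [norm_smul, Real.norm_eq_abs, abs_of_pos (inv_pos.2 hτ0)]
        have hττ : τ⁻¹ * τ ^ (r + 2) = τ ^ (r + 1) := by
          rw [show τ ^ (r + 2) = τ * τ ^ (r + 1) by ring, ← mul_assoc,
            inv_mul_cancel₀ hτne, one_mul]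
        have hS2' : τ⁻¹ * ‖∑ k ∈ Finset.Icc 2 (r + 1), ((-1 : ℂ) ^ k / (k.factorial : ℂ)) •
            ∑ i ∈ (Finset.Nat.antidiagonalTuple k (r + 1 + 1)).filter (fun i => ∀ j, 1 ≤ i j),
              nestedAd (fun j => Ω (i j)) P‖ ≤ (p:ℝ) * (B * τ ^ (r + 1)) := by
          calc τ⁻¹ * ‖∑ k ∈ Finset.Icc 2 (r + 1), ((-1 : ℂ) ^ k / (k.factorial : ℂ)) •
              ∑ i ∈ (Finset.Nat.antidiagonalTuple k (r + 1 + 1)).filter (fun i => ∀ j, 1 ≤ i j),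
                nestedAd (fun j => Ω (i j)) P‖
              ≤ τ⁻¹ * ((p:ℝ) * (B * τ ^ (r + 2))) :=
                mul_le_mul_of_nonneg_left hS2 (by positivity)
            _ = (p:ℝ) * B * (τ⁻¹ * τ ^ (r + 2)) := by ring
            _ = (p:ℝ) * (B * τ ^ (r + 1)) := by rw [hττ]; ring
        calc ‖∑ k ∈ Finset.Icc 1 (r + 1), ((-1 : ℂ) ^ k / (k.factorial : ℂ)) •
              ∑ i ∈ (Finset.Nat.antidiagonalTuple k (r + 1)).filter (fun i => ∀ j, 1 ≤ i j),
                nestedAd (fun j => Ω (i j)) M‖ +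
            τ⁻¹ * ‖∑ k ∈ Finset.Icc 2 (r + 1), ((-1 : ℂ) ^ k / (k.factorial : ℂ)) •
              ∑ i ∈ (Finset.Nat.antidiagonalTuple k (r + 1 + 1)).filter (fun i => ∀ j, 1 ≤ i j),
                nestedAd (fun j => Ω (i j)) P‖
            ≤ (p:ℝ) * (B * τ ^ (r + 1)) + (p:ℝ) * (B * τ ^ (r + 1)) := add_le_add hS1 hS2'
          _ = 2 * (p:ℝ) * B * τ ^ (r + 1) := by ring
          _ ≤ R * C r ^ p * τ ^ (r + 1) := mul_le_mul_of_nonneg_right h2pB (by positivity)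
          _ = C (r + 1) * τ ^ (r + 1) := by rw [hCsucc]
  -- final Ω bounds
  have finalΩ : ∀ q, 1 ≤ q → q ≤ p → ‖Ω q‖ ≤ α * C p * τ ^ q := by
    intro q h1 h2
    obtain ⟨r, rfl⟩ : ∃ r, q = r + 1 := ⟨q - 1, by omega⟩
    have h := hΩbound r (key r (by omega))
    refine h.trans ?_
    apply mul_le_mul_of_nonneg_right _ (by positivity)
    exact mul_le_mul_of_nonneg_left (hCmono (by omega : r ≤ p)) (by linarith)
  refine ⟨finalΩ, ?_⟩
  refine (norm_sum_le _ _).trans ?_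
  have h1 := Finset.sum_le_card_nsmul (Finset.Icc 1 p) (fun q => ‖Ω q‖) (α * C p * τ) ?_
  · refine h1.trans ?_
    rw [nsmul_eq_mul, Nat.card_Icc]
    simp only [Nat.add_sub_cancel]
    calc ((p:ℝ)) * (α * C p * τ) = (p:ℝ) * (α * C p) * τ := by ring
      _ ≤ (p:ℝ) * (α * C p) * τ := le_refl _
  · intro q hq
    rw [Finset.mem_Icc] at hq
    refine (finalΩ q hq.1 hq.2).trans ?_
    have hτq : τ ^ q ≤ τ := by
      calc τ ^ q ≤ τ ^ 1 := pow_le_pow_of_le_one hτ0.le hτ1.le hq.1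
        _ = τ := pow_one τ
    apply mul_le_mul_of_nonneg_left hτq
    nlinarith [hC1 p]
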